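/- Let S be a commutative ring of characteristic p. The map sending u to its 0-th Witt coordinate u₀ is a surjective group homomorphism from the group G(S) = {u ∈ W(S)^× : frobenius u = 1} onto the group μ_p(S) = {ζ ∈ S^× : ζ^p = 1}, and the Teichmüller map ζ ↦ [ζ] defines a group-theoretic section of it. -/

import Mathlib

theorem coeff_zero_surjective_onto_mu_p (p : ℕ) [Fact p.Prime] (S : Type*) [CommRing S]
    [CharP S p] :
    ∃ (G : Subgroup (WittVector p S)ˣ) (μ : Subgroup Sˣ) (φ : G →* μ) (σ : μ →* G),
      (∀ u : (WittVector p S)ˣ,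
        u ∈ G ↔ WittVector.frobenius (u : WittVector p S) = 1) ∧
      (∀ ζ : Sˣ, ζ ∈ μ ↔ (ζ : S) ^ p = 1) ∧
      (∀ u : G, ((φ u : Sˣ) : S) = ((u : (WittVector p S)ˣ) : WittVector p S).coeff 0) ∧
      (∀ ζ : μ, ((σ ζ : (WittVector p S)ˣ) : WittVector p S) =
        WittVector.teichmuller p ((ζ : Sˣ) : S)) ∧
      Function.Surjective φ ∧
      φ.comp σ = MonoidHom.id μ := by
  set G : Subgroup (WittVector p S)ˣ :=
    (Units.map (WittVector.frobenius : WittVector p S →+* WittVector p S).toMonoidHom).ker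
  set μ : Subgroup Sˣ := (powMonoidHom p : Sˣ →* Sˣ).ker
  have hG : ∀ u : (WittVector p S)ˣ,
      u ∈ G ↔ WittVector.frobenius (u : WittVector p S) = 1 := by
    intro u
    simp [G, MonoidHom.mem_ker, Units.ext_iff]
  have hμ : ∀ ζ : Sˣ, ζ ∈ μ ↔ (ζ : S) ^ p = 1 := by
    intro ζ
    simp [μ, MonoidHom.mem_ker, powMonoidHom, Units.ext_iff]
  -- φ
  have hφmem : ∀ u : G, Units.map (WittVector.constantCoeff :
      WittVector p S →+* S).toMonoidHom (u : (WittVector p S)ˣ) ∈ μ := by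
    rintro ⟨u, hu⟩
    rw [hμ]
    have h1 : WittVector.frobenius (u : WittVector p S) = 1 := (hG u).mp hu
    have := congrArg (fun x : WittVector p S => x.coeff 0) h1
    simpa [WittVector.coeff_frobenius_charP] using this
  refine ⟨G, μ,
    ((Units.map (WittVector.constantCoeff : WittVector p S →+* S).toMonoidHom).comp
      G.subtype).codRestrict μ hφmem, ?_, hG, hμ, ?_, ?_, ?_, ?_⟩
  · -- σ
    have hσmem : ∀ ζ : μ, Units.map (WittVector.teichmuller p (R := S))
        (ζ : Sˣ) ∈ G := by
      rintro ⟨ζ, hζ⟩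
      rw [hG]
      have hp : ((ζ : Sˣ) : S) ^ p = 1 := (hμ ζ).mp hζ
      show WittVector.frobenius (WittVector.teichmuller p ((ζ : Sˣ) : S)) = 1
      rw [WittVector.frobenius_eq_map_frobenius, WittVector.map_teichmuller]
      show WittVector.teichmuller p (((ζ : Sˣ) : S) ^ p) = 1
      rw [hp]
      exact map_one _
    exact ((Units.map (WittVector.teichmuller p (R := S))).comp μ.subtype).codRestrict G hσmem
  · intro u; rfl
  · intro ζ; rfl
  · intro ζ
    refine ⟨⟨Units.map (WittVector.teichmuller p (R := S)) (ζ : Sˣ), ?_⟩, ?_⟩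
    · rw [hG]
      have hp : ((ζ : Sˣ) : S) ^ p = 1 := (hμ ζ).mp ζ.2
      show WittVector.frobenius (WittVector.teichmuller p ((ζ : Sˣ) : S)) = 1
      rw [WittVector.frobenius_eq_map_frobenius, WittVector.map_teichmuller]
      show WittVector.teichmuller p (((ζ : Sˣ) : S) ^ p) = 1
      rw [hp]; exact map_one _
    · ext
      simp [WittVector.teichmuller_coeff_zero]
  · ext ζ
    show (WittVector.teichmuller p ((ζ : Sˣ) : S)).coeff 0 = _
    simp [WittVector.teichmuller_coeff_zero]
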